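/- Let P ⊂ ℕ× be the multiplicative monoid generated by a set S of pairwise relatively prime integers ≥ 2 with |S| ≥ 2, and let ψ : P → C(𝕋,𝕋) satisfy ψ_{pq}(z) = ψ_p(z)ψ_q(z^p) for all p,q ∈ P. If ψ_p = ψ_q = f for two distinct generators p, q ∈ S, then f is constant. -/

import Mathlib

lemma circle_exp_pow (x : ℝ) (n : ℕ) : Circle.exp x ^ n = Circle.exp (n * x) := by
  induction n with
  | zero => simp
  | succ k ih =>
    rw [pow_succ, ih, ← Circle.exp_add]
    congr 1
    push_cast
    ring

lemma aux_const (p q : ℕ) (hp2 : 2 ≤ p) (hpq : p < q)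
    (f : C(Circle, Circle)) (hrel : ∀ z : Circle, f (z ^ p) = f (z ^ q)) :
    ∀ z : Circle, f z = f 1 := by
  have hn : ∀ n : ℕ, ∀ z : Circle, f (z ^ p ^ n) = f (z ^ q ^ n) := by
    intro n
    induction n with
    | zero => simp
    | succ k ih =>
      intro z
      calc f (z ^ p ^ (k + 1)) = f ((z ^ p ^ k) ^ p) := by rw [← pow_mul, pow_succ]
        _ = f ((z ^ p ^ k) ^ q) := hrel _
        _ = f ((z ^ q) ^ p ^ k) := by rw [← pow_mul, ← pow_mul, mul_comm]
        _ = f ((z ^ q) ^ q ^ k) := ih _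
        _ = f (z ^ q ^ (k + 1)) := by rw [← pow_mul, pow_succ, mul_comm]
  intro z
  set θ : ℝ := Complex.arg z with hθ
  have hz : Circle.exp θ = z := Circle.exp_arg z
  have hqpos : ∀ n : ℕ, (0:ℝ) < (q : ℝ) ^ n := fun n =>
    pow_pos (by exact_mod_cast lt_of_lt_of_le (by norm_num) (le_of_lt (lt_of_le_of_lt hp2 hpq))) n
  have key : ∀ n : ℕ, f z = f (Circle.exp ((p : ℝ) ^ n * (θ / (q : ℝ) ^ n))) := by
    intro n
    have h1 : (Circle.exp (θ / (q : ℝ) ^ n)) ^ q ^ n = z := by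
      rw [circle_exp_pow]
      rw [show ((q ^ n : ℕ) : ℝ) * (θ / (q : ℝ) ^ n) = θ by
        push_cast
        rw [mul_div_assoc']
        exact mul_div_cancel_left₀ θ (ne_of_gt (hqpos n))]
      exact hz
    calc f z = f ((Circle.exp (θ / (q : ℝ) ^ n)) ^ q ^ n) := by rw [h1]
      _ = f ((Circle.exp (θ / (q : ℝ) ^ n)) ^ p ^ n) := (hn n _).symm
      _ = f (Circle.exp ((p : ℝ) ^ n * (θ / (q : ℝ) ^ n))) := by
          rw [circle_exp_pow]; push_cast; ring_nf
  -- the argument tends to 0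
  have hlim : Filter.Tendsto (fun n : ℕ => (p : ℝ) ^ n * (θ / (q : ℝ) ^ n))
      Filter.atTop (nhds 0) := by
    have h : ∀ n : ℕ, (p : ℝ) ^ n * (θ / (q : ℝ) ^ n) = θ * ((p : ℝ) / q) ^ n := by
      intro n
      rw [div_pow]
      field_simp
    simp only [h]
    rw [show (0:ℝ) = θ * 0 by ring]
    apply Filter.Tendsto.const_mul
    apply tendsto_pow_atTop_nhds_zero_of_lt_one
    · positivity
    · rw [div_lt_one (hqpos 1 |>.trans_eq (by ring))]
      exact_mod_cast hpq
  have hcont : Filter.Tendsto (fun n : ℕ => f (Circle.exp ((p : ℝ) ^ n * (θ / (q : ℝ) ^ n))))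
      Filter.atTop (nhds (f 1)) := by
    have := (f.continuous.comp Circle.exp.continuous).continuousAt (x := (0:ℝ))
    have h := this.tendsto.comp hlim
    simpa [Circle.exp_zero, Function.comp_def] using h
  have : Filter.Tendsto (fun _ : ℕ => f z) Filter.atTop (nhds (f 1)) := by
    apply hcont.congr
    intro n
    exact (key n).symm
  exact tendsto_nhds_unique tendsto_const_nhds this

/-- For `P = ⟨S⟩` with `S` a set of pairwise coprime integers `≥ 2`, `|S| ≥ 2`, and a
θ-twisted homomorphism `ψ`, if `ψ_p = ψ_q = f` for two distinct generators `p, q ∈ S`,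
then `f` is constant. -/
theorem stmt12 (S : Set ℕ) (hS2 : ∀ s ∈ S, 2 ≤ s)
    (hcop : ∀ a ∈ S, ∀ b ∈ S, a ≠ b → Nat.Coprime a b)
    (hcard : S.Nontrivial)
    (ψ : ℕ → C(Circle, Circle))
    (htwist : ∀ p q : ℕ, p ∈ Submonoid.closure S → q ∈ Submonoid.closure S →
      ∀ z : Circle, ψ (p * q) z = ψ p z * ψ q (z ^ p))
    (p q : ℕ) (hp : p ∈ S) (hq : q ∈ S) (hpq : p ≠ q)
    (f : C(Circle, Circle)) (hfp : ψ p = f) (hfq : ψ q = f) :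
    ∃ c : Circle, ∀ z : Circle, f z = c := by
  have hpc : p ∈ Submonoid.closure S := Submonoid.subset_closure hp
  have hqc : q ∈ Submonoid.closure S := Submonoid.subset_closure hq
  have hrel : ∀ z : Circle, f (z ^ p) = f (z ^ q) := by
    intro z
    have h1 := htwist p q hpc hqc z
    have h2 := htwist q p hqc hpc z
    rw [mul_comm q p] at h2
    rw [h1, hfp, hfq] at h2
    exact mul_left_cancel h2
  refine ⟨f 1, ?_⟩
  rcases lt_or_gt_of_ne hpq with h | h
  · exact aux_const p q (hS2 p hp) h f hrel
  · exact aux_const q p (hS2 q hq) h f (fun z => (hrel z).symm)
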